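/- Let d ≥ 1, let g ≥ 0 and μ ≥ 0, and let h be a smooth, strictly positive solution on [0,T] of the lubrication equation ∂_t h − div(g h ∇h − μ h ∇Δh) = 0 on 𝕋^d. Then for every t ∈ [0,T], (d/dt) ∫_{𝕋^d} h(t,x)^2 dx ≤ 0. -/

import Mathlib

open MeasureTheory Real

/-- Partial derivative `∂ᵢ f` of a function on `ℝᵈ` (as `EuclideanSpace`). -/
noncomputable def pder {d : ℕ} (i : Fin d) (f : EuclideanSpace ℝ (Fin d) → ℝ)
    (x : EuclideanSpace ℝ (Fin d)) : ℝ :=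
  fderiv ℝ f x (EuclideanSpace.single i 1)

/-- The Laplacian `Δ f = ∑ᵢ ∂ᵢ∂ᵢ f`. -/
noncomputable def lap {d : ℕ} (f : EuclideanSpace ℝ (Fin d) → ℝ)
    (x : EuclideanSpace ℝ (Fin d)) : ℝ :=
  ∑ i, pder i (pder i f) x

/-- Squared norm of the gradient, `|∇f|² = ∑ᵢ (∂ᵢ f)²`. -/
noncomputable def gradSq {d : ℕ} (f : EuclideanSpace ℝ (Fin d) → ℝ)
    (x : EuclideanSpace ℝ (Fin d)) : ℝ :=
  ∑ i, (pder i f x) ^ 2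

/-- Squared Frobenius norm of the Hessian, `|∇∇f|² = ∑ᵢⱼ (∂ᵢ∂ⱼ f)²`. -/
noncomputable def hessSq {d : ℕ} (f : EuclideanSpace ℝ (Fin d) → ℝ)
    (x : EuclideanSpace ℝ (Fin d)) : ℝ :=
  ∑ i, ∑ j, (pder i (pder j f) x) ^ 2

/-- The fundamental domain `[0,1)^d` of the torus `𝕋^d`. -/
def fundDom (d : ℕ) : Set (EuclideanSpace ℝ (Fin d)) :=
  {x | ∀ i, 0 ≤ x i ∧ x i < 1}

/-- `ℤ^d`-periodicity of a function on `ℝ^d`. -/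
def ZPeriodic {d : ℕ} (f : EuclideanSpace ℝ (Fin d) → ℝ) : Prop :=
  ∀ (x : EuclideanSpace ℝ (Fin d)) (k : Fin d → ℤ),
    f (x + (WithLp.equiv 2 (Fin d → ℝ)).symm (fun i => (k i : ℝ))) = f x

namespace LubAux

lemma le1 : ((⊤:ℕ∞) : WithTop ℕ∞) ≠ 0 := by simp
lemma leT : ((⊤:ℕ∞) : WithTop ℕ∞) + 1 ≤ ((⊤:ℕ∞) : WithTop ℕ∞) := by norm_cast

variable {d : ℕ}

lemma contDiff_pder {f : EuclideanSpace ℝ (Fin d) → ℝ} (hf : ContDiff ℝ (⊤:ℕ∞) f) (i : Fin d) :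
    ContDiff ℝ (⊤:ℕ∞) (pder i f) :=
  (hf.fderiv_right leT).clm_apply contDiff_const

lemma contDiff_lap {f : EuclideanSpace ℝ (Fin d) → ℝ} (hf : ContDiff ℝ (⊤:ℕ∞) f) :
    ContDiff ℝ (⊤:ℕ∞) (lap f) := by
  have : lap f = fun x => ∑ i, pder i (pder i f) x := rfl
  rw [this]
  exact ContDiff.sum (fun i _ => contDiff_pder (contDiff_pder hf i) i)

lemma pder_mul {f g : EuclideanSpace ℝ (Fin d) → ℝ} (hf : ContDiff ℝ (⊤:ℕ∞) f)
    (hg : ContDiff ℝ (⊤:ℕ∞) g) (i : Fin d) (x) :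
    pder i (fun y => f y * g y) x = pder i f x * g x + f x * pder i g x := by
  have := fderiv_fun_mul (𝕜 := ℝ) (hf.differentiable le1 x) (hg.differentiable le1 x)
  simp only [pder, this, ContinuousLinearMap.add_apply, ContinuousLinearMap.smul_apply,
    smul_eq_mul]
  ring

lemma pder_const_mul {f : EuclideanSpace ℝ (Fin d) → ℝ} (hf : ContDiff ℝ (⊤:ℕ∞) f)
    (c : ℝ) (i : Fin d) (x) :
    pder i (fun y => c * f y) x = c * pder i f x := by
  simp [pder, fderiv_const_mul (hf.differentiable le1 x) c]

lemma pder_sub {f g : EuclideanSpace ℝ (Fin d) → ℝ} (hf : ContDiff ℝ (⊤:ℕ∞) f)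
    (hg : ContDiff ℝ (⊤:ℕ∞) g) (i : Fin d) (x) :
    pder i (fun y => f y - g y) x = pder i f x - pder i g x := by
  simp [pder, fderiv_fun_sub (hf.differentiable le1 x) (hg.differentiable le1 x)]

lemma pder_sum {ι : Type*} (s : Finset ι) {f : ι → EuclideanSpace ℝ (Fin d) → ℝ}
    (hf : ∀ j, ContDiff ℝ (⊤:ℕ∞) (f j)) (i : Fin d) (x) :
    pder i (fun y => ∑ j ∈ s, f j y) x = ∑ j ∈ s, pder i (f j) x := by
  simp [pder, fderiv_fun_sum (fun j _ => (hf j).differentiable le1 x)]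

lemma pder_comm {f : EuclideanSpace ℝ (Fin d) → ℝ} (hf : ContDiff ℝ (⊤:ℕ∞) f)
    (i j : Fin d) (x) : pder i (pder j f) x = pder j (pder i f) x := by
  have hdf : Differentiable ℝ (fderiv ℝ f) := (hf.fderiv_right leT).differentiable le1
  have key : ∀ v w, fderiv ℝ (fderiv ℝ f) x v w = fderiv ℝ (fderiv ℝ f) x w v := fun v w =>
    second_derivative_symmetric (fun y => (hf.differentiable le1 y).hasFDerivAt)
      (hdf x).hasFDerivAt v w
  have h1 : ∀ (v : EuclideanSpace ℝ (Fin d)) (k : Fin d),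
      pder k (fun y => fderiv ℝ f y v) x
      = fderiv ℝ (fderiv ℝ f) x (EuclideanSpace.single k 1) v := by
    intro v k
    simp only [pder]
    rw [fderiv_clm_apply (hdf x) (differentiableAt_const v)]
    simp
  have e1 : pder i (pder j f) x = pder i (fun y => fderiv ℝ f y (EuclideanSpace.single j 1)) x :=
    rfl
  have e2 : pder j (pder i f) x = pder j (fun y => fderiv ℝ f y (EuclideanSpace.single i 1)) x :=
    rfl
  rw [e1, e2, h1, h1, key]

end LubAux

namespace LubAux
variable {d : ℕ}

lemma ZPeriodic.pderP {f : EuclideanSpace ℝ (Fin d) → ℝ} (hf : ContDiff ℝ (⊤:ℕ∞) f)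
    (hp : ZPeriodic f) (i : Fin d) : ZPeriodic (pder i f) := by
  intro x k
  set c := (WithLp.equiv 2 (Fin d → ℝ)).symm (fun i => (k i : ℝ)) with hc
  have hfe : (fun y => f (y + c)) = f := funext fun y => hp y k
  have h2 : HasFDerivAt (fun y : EuclideanSpace ℝ (Fin d) => y + c)
      (ContinuousLinearMap.id ℝ _) x := (hasFDerivAt_id x).add_const c
  have h1 : HasFDerivAt (fun y => f (y + c)) (fderiv ℝ f (x + c)) x := by
    simpa [Function.comp_def] using ((hf.differentiable le1 (x + c)).hasFDerivAt).comp x h2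
  rw [hfe] at h1
  have : fderiv ℝ f x = fderiv ℝ f (x + c) := h1.fderiv
  simp only [pder, ← this]

lemma ZPeriodic.mulP {f g : EuclideanSpace ℝ (Fin d) → ℝ} (hp : ZPeriodic f) (hq : ZPeriodic g) :
    ZPeriodic (fun x => f x * g x) := fun x k => by simp only [hp x k, hq x k]

lemma ZPeriodic.sumP {ι : Type*} (s : Finset ι) {f : ι → EuclideanSpace ℝ (Fin d) → ℝ}
    (hp : ∀ j, ZPeriodic (f j)) : ZPeriodic (fun x => ∑ j ∈ s, f j x) :=
  fun x k => Finset.sum_congr rfl fun j _ => hp j x k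

lemma measurableSet_fundDom : MeasurableSet (fundDom d) := by
  have : fundDom d = ⋂ i, {x : EuclideanSpace ℝ (Fin d) | 0 ≤ x i ∧ x i < 1} := by
    ext x; simp [fundDom, Set.mem_iInter]
  rw [this]
  refine MeasurableSet.iInter fun i => ?_
  have hm : Measurable fun x : EuclideanSpace ℝ (Fin d) => x i :=
    (continuous_apply i).comp (PiLp.continuousLinearEquiv 2 ℝ (fun _ : Fin d => ℝ)).continuous
      |>.measurable
  exact (measurableSet_le measurable_const hm).inter (measurableSet_lt hm measurable_const)

lemma fundDom_subset_closedBall :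
    fundDom d ⊆ Metric.closedBall (0 : EuclideanSpace ℝ (Fin d)) (Real.sqrt d) := by
  intro x hx
  simp only [Metric.mem_closedBall, dist_zero_right]
  rw [EuclideanSpace.norm_eq]
  apply Real.sqrt_le_sqrt
  calc ∑ i, ‖x i‖ ^ 2 ≤ ∑ _i : Fin d, 1 := by
        refine Finset.sum_le_sum fun i _ => ?_
        have h1 := (hx i).1; have h2 := (hx i).2
        have : ‖x i‖ ≤ 1 := by rw [Real.norm_eq_abs, abs_of_nonneg h1]; linarith
        calc ‖x i‖ ^ 2 ≤ 1 ^ 2 := by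
              refine pow_le_pow_left₀ (norm_nonneg _) this 2
          _ = 1 := one_pow 2
    _ = (d : ℝ) := by simp

lemma integrableOn_fundDom {f : EuclideanSpace ℝ (Fin d) → ℝ} (hf : Continuous f) :
    IntegrableOn f (fundDom d) := by
  have : IntegrableOn f (Metric.closedBall (0 : EuclideanSpace ℝ (Fin d)) (Real.sqrt d)) :=
    hf.continuousOn.integrableOn_compact (isCompact_closedBall _ _)
  exact this.mono_set fundDom_subset_closedBall

lemma volume_fundDom_lt_top : volume (fundDom d) < ⊤ :=
  lt_of_le_of_lt (measure_mono fundDom_subset_closedBall) measure_closedBall_lt_top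

end LubAux

namespace LubAux
variable {d : ℕ}

lemma integral_pder_eq_zero {f : EuclideanSpace ℝ (Fin d) → ℝ} (hf : ContDiff ℝ (⊤:ℕ∞) f)
    (hp : ZPeriodic f) (i : Fin d) :
    ∫ x in fundDom d, pder i f x = 0 := by
  have hd0 : d ≠ 0 := fun h => (h ▸ i).elim0
  obtain ⟨n, rfl⟩ : ∃ n, d = n + 1 :=
    ⟨d - 1, (Nat.succ_pred_eq_of_pos (Nat.pos_of_ne_zero hd0)).symm⟩
  set eL := PiLp.continuousLinearEquiv 2 ℝ (fun _ : Fin (n+1) => ℝ) with heL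
  set ψ := (MeasurableEquiv.toLp 2 (Fin (n+1) → ℝ)).symm with hψ
  set G : (Fin (n+1) → ℝ) → ℝ := f ∘ eL.symm with hG
  have hGc : ContDiff ℝ (⊤:ℕ∞) G := hf.comp (eL.symm.contDiff)
  have hGd : Differentiable ℝ G := hGc.differentiable le1
  -- step 1 : transfer to pi space
  have step1 : ∫ x in fundDom (n+1), pder i f x
      = ∫ y in Set.pi Set.univ (fun _ : Fin (n+1) => Set.Ico (0:ℝ) 1),
          pder i f (eL.symm y) := by
    have himg : ψ '' fundDom (n+1) = Set.pi Set.univ (fun _ : Fin (n+1) => Set.Ico (0:ℝ) 1) := by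
      ext y
      constructor
      · rintro ⟨x, hx, rfl⟩
        intro j _
        exact ⟨(hx j).1, (hx j).2⟩
      · intro hy
        refine ⟨ψ.symm y, fun j => ?_, by simp⟩
        exact ⟨(hy j (Set.mem_univ j)).1, (hy j (Set.mem_univ j)).2⟩
    have := (EuclideanSpace.volume_preserving_symm_measurableEquiv_toLp (Fin (n+1))).setIntegral_image_emb
      ψ.measurableEmbedding (fun y => pder i f (eL.symm y)) (fundDom (n+1))
    rw [himg] at this
    rw [this]
    rfl
  -- step 2 : Ico box to Icc box
  have step2 : ∫ y in Set.pi Set.univ (fun _ : Fin (n+1) => Set.Ico (0:ℝ) 1),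
        pder i f (eL.symm y)
      = ∫ y in Set.Icc (0 : Fin (n+1) → ℝ) 1, pder i f (eL.symm y) := by
    refine setIntegral_congr_set ?_
    have : (volume : Measure (Fin (n+1) → ℝ)) = Measure.pi fun _ => volume := volume_pi
    rw [this]
    exact MeasureTheory.Measure.univ_pi_Ico_ae_eq_Icc
  -- the vector field
  set c : Fin (n+1) → ℝ := fun j => if j = i then (1:ℝ) else 0 with hc
  set fv : Fin (n+1) → (Fin (n+1) → ℝ) → ℝ := fun j x => c j * G x with hfv
  set fv' : Fin (n+1) → (Fin (n+1) → ℝ) → (Fin (n+1) → ℝ) →L[ℝ] ℝ :=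
    fun j x => c j • fderiv ℝ G x with hfv'
  have hder : ∀ (x) (j), HasFDerivAt (fv j) (fv' j x) x := fun x j =>
    ((hGd x).hasFDerivAt).const_mul (c j)
  have hGper : ∀ (z : Fin (n+1) → ℝ), G (z + Pi.single i 1) = G z := by
    intro z
    have h0 := hp (eL.symm z) (fun j' => if j' = i then (1:ℤ) else 0)
    have harg : (WithLp.equiv 2 (Fin (n+1) → ℝ)).symm
        (fun j => ((if j = i then (1:ℤ) else 0 : ℤ) : ℝ)) = eL.symm (Pi.single i 1) := by
      have hfun : (fun j => ((if j = i then (1:ℤ) else 0 : ℤ) : ℝ)) = Pi.single i (1:ℝ) := by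
        funext j; by_cases hj : j = i <;> simp [hj, Pi.single_apply]
      rw [hfun]; rfl
    rw [harg] at h0
    calc G (z + Pi.single i 1) = f (eL.symm z + eL.symm (Pi.single i 1)) := by
          simp [hG, Function.comp, map_add]
      _ = f (eL.symm z) := h0
      _ = G z := rfl
  -- divergence theorem
  have div_thm := integral_divergence_of_hasFDerivAt_off_countable'
    (0 : Fin (n+1) → ℝ) 1 zero_le_one fv fv' ∅ Set.countable_empty
    (fun j => ((continuous_const.mul hGc.continuous).continuousOn))
    (fun x _ j => hder x j)
    (by
      apply ContinuousOn.integrableOn_compact isCompact_Icc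
      apply Continuous.continuousOn
      apply continuous_finset_sum
      intro j _
      exact (((hGc.fderiv_right leT).continuous.clm_apply continuous_const).const_smul (c j)))
  -- identify the divergence with our integrand
  have hdiv_eq : ∀ y, (∑ j, fv' j y (Pi.single j 1)) = pder i f (eL.symm y) := by
    intro y
    have h1 : ∀ j, fv' j y (Pi.single j 1) =
        if j = i then fderiv ℝ G y (Pi.single j 1) else 0 := by
      intro j
      by_cases hj : j = i <;> simp [hfv', hc, hj]
    rw [Finset.sum_congr rfl fun j _ => h1 j, Finset.sum_ite_eq' Finset.univ i
      (fun j => fderiv ℝ G y (Pi.single j 1))]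
    simp only [Finset.mem_univ, if_true]
    -- fderiv of composition
    have hcomp : fderiv ℝ G y = (fderiv ℝ f (eL.symm y)).comp (eL.symm : (Fin (n+1) → ℝ) →L[ℝ] _) := by
      rw [hG, fderiv_comp y (hf.differentiable le1 _) (eL.symm.differentiableAt)]
      congr 1
      exact eL.symm.fderiv
    rw [hcomp]
    rfl
  have hzero : ∫ y in Set.Icc (0 : Fin (n+1) → ℝ) 1, pder i f (eL.symm y) = 0 := by
    have hrw : ∫ y in Set.Icc (0 : Fin (n+1) → ℝ) 1, pder i f (eL.symm y)
        = ∫ y in Set.Icc (0 : Fin (n+1) → ℝ) 1, ∑ j, fv' j y (Pi.single j 1) :=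
      setIntegral_congr_fun measurableSet_Icc (fun y _ => (hdiv_eq y).symm)
    rw [hrw, div_thm]
    refine Finset.sum_eq_zero fun j _ => ?_
    have hpt : ∀ x : Fin n → ℝ, fv j (j.insertNth ((1 : Fin (n+1) → ℝ) j) x)
        = fv j (j.insertNth ((0 : Fin (n+1) → ℝ) j) x) := by
      intro x
      by_cases hj : j = i
      · subst hj
        have hins : j.insertNth (α := fun _ : Fin (n+1) => ℝ) (1:ℝ) x
            = j.insertNth (α := fun _ : Fin (n+1) => ℝ) (0:ℝ) x + Pi.single j 1 := by
          have h2 := Fin.insertNth_add (α := fun _ : Fin (n+1) => ℝ) j (0:ℝ) (1:ℝ) x 0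
          simpa [Fin.insertNth_zero_right] using h2
        simp only [hfv, Pi.one_apply, Pi.zero_apply, hins, hGper]
      · simp [hfv, hc, hj]
    rw [setIntegral_congr_fun measurableSet_Icc (fun x _ => hpt x), sub_self]
  rw [step1, step2, hzero]

end LubAux

namespace LubAux
variable {d : ℕ}

lemma I_congr {f g : EuclideanSpace ℝ (Fin d) → ℝ} (h : ∀ x, f x = g x) :
    ∫ x in fundDom d, f x = ∫ x in fundDom d, g x := by rw [funext h]

lemma I_sub {f g : EuclideanSpace ℝ (Fin d) → ℝ} (hf : Continuous f) (hg : Continuous g) :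
    ∫ x in fundDom d, (f x - g x) = (∫ x in fundDom d, f x) - ∫ x in fundDom d, g x :=
  integral_sub (integrableOn_fundDom hf) (integrableOn_fundDom hg)

lemma I_add {f g : EuclideanSpace ℝ (Fin d) → ℝ} (hf : Continuous f) (hg : Continuous g) :
    ∫ x in fundDom d, (f x + g x) = (∫ x in fundDom d, f x) + ∫ x in fundDom d, g x :=
  integral_add (integrableOn_fundDom hf) (integrableOn_fundDom hg)

lemma I_sum {ι : Type*} (s : Finset ι) {f : ι → EuclideanSpace ℝ (Fin d) → ℝ}
    (hf : ∀ j, Continuous (f j)) :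
    ∫ x in fundDom d, (∑ j ∈ s, f j x) = ∑ j ∈ s, ∫ x in fundDom d, f j x :=
  integral_finset_sum s (fun j _ => integrableOn_fundDom (hf j))

lemma I_nonneg {f : EuclideanSpace ℝ (Fin d) → ℝ} (h : ∀ x, 0 ≤ f x) :
    0 ≤ ∫ x in fundDom d, f x :=
  setIntegral_nonneg measurableSet_fundDom (fun x _ => h x)

lemma ZPeriodic.subP {f g : EuclideanSpace ℝ (Fin d) → ℝ} (hp : ZPeriodic f) (hq : ZPeriodic g) :
    ZPeriodic (fun x => f x - g x) := fun x k => by simp only [hp x k, hq x k]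

lemma ZPeriodic.constP (c : ℝ) : ZPeriodic (fun _ : EuclideanSpace ℝ (Fin d) => c) :=
  fun _ _ => rfl

lemma ZPeriodic.lapP {f : EuclideanSpace ℝ (Fin d) → ℝ} (hf : ContDiff ℝ (⊤:ℕ∞) f)
    (hp : ZPeriodic f) : ZPeriodic (lap f) := by
  have : lap f = fun x => ∑ i, pder i (pder i f) x := rfl
  rw [this]
  exact ZPeriodic.sumP Finset.univ fun i =>
    ZPeriodic.pderP (contDiff_pder hf i) (ZPeriodic.pderP hf hp i) i

lemma ibp {u v : EuclideanSpace ℝ (Fin d) → ℝ} (hu : ContDiff ℝ (⊤:ℕ∞) u)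
    (hv : ContDiff ℝ (⊤:ℕ∞) v) (hup : ZPeriodic u) (hvp : ZPeriodic v) (i : Fin d) :
    ∫ x in fundDom d, u x * pder i v x = - ∫ x in fundDom d, pder i u x * v x := by
  have h0 := integral_pder_eq_zero (hu.mul hv) (ZPeriodic.mulP hup hvp) i
  have h1 : ∫ x in fundDom d, pder i (fun y => u y * v y) x
      = (∫ x in fundDom d, pder i u x * v x) + ∫ x in fundDom d, u x * pder i v x := by
    rw [I_congr (pder_mul hu hv i)]
    exact I_add ((contDiff_pder hu i).continuous.mul (hv.continuous))
      (hu.continuous.mul (contDiff_pder hv i).continuous)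
  rw [h1] at h0
  linarith

end LubAux

namespace LubAux
variable {d : ℕ}

lemma spatial {u : EuclideanSpace ℝ (Fin d) → ℝ} (hu : ContDiff ℝ (⊤:ℕ∞) u)
    (hp : ZPeriodic u) (hpos : ∀ x, 0 < u x) (g μ : ℝ) (hg : 0 ≤ g) (hμ : 0 ≤ μ) :
    ∫ x in fundDom d,
      (2 * u x * (∑ i, pder i (fun y =>
        g * u y * pder i u y - μ * u y * pder i (lap u) y) x)) ≤ 0 := by
  -- smoothness
  have hui : ∀ i, ContDiff ℝ (⊤:ℕ∞) (pder i u) := contDiff_pder hu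
  have huij : ∀ i j, ContDiff ℝ (⊤:ℕ∞) (pder j (pder i u)) := fun i j =>
    contDiff_pder (hui i) j
  have hL : ContDiff ℝ (⊤:ℕ∞) (lap u) := contDiff_lap hu
  have hLi : ∀ i, ContDiff ℝ (⊤:ℕ∞) (pder i (lap u)) := contDiff_pder hL
  -- periodicity
  have hpi : ∀ i, ZPeriodic (pder i u) := fun i => ZPeriodic.pderP hu hp i
  have hpij : ∀ i j, ZPeriodic (pder j (pder i u)) := fun i j =>
    ZPeriodic.pderP (hui i) (hpi i) j
  have hpL : ZPeriodic (lap u) := ZPeriodic.lapP hu hp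
  have hpLi : ∀ i, ZPeriodic (pder i (lap u)) := fun i => ZPeriodic.pderP hL hpL i
  -- quantities
  set A : ℝ := ∑ i, ∑ j, ∫ x in fundDom d,
      u x * (pder j (pder i u) x * pder j (pder i u) x) with hA
  set B : ℝ := ∑ i, ∫ x in fundDom d, pder i u x * pder i u x * lap u x with hB
  set C : ℝ := ∫ x in fundDom d, u x * (lap u x * lap u x) with hC
  set D : ℝ := ∑ i, ∑ j, ∫ x in fundDom d,
      pder j u x * pder i u x * pder j (pder i u) x with hD
  set Ee : ℝ := ∑ i, ∫ x in fundDom d, (u x * pder i u x) * pder i (lap u) x with hEe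
  set Gg : ℝ := ∑ i, ∫ x in fundDom d, u x * (pder i u x * pder i u x) with hGg
  -- nonnegativity
  have hA0 : 0 ≤ A := Finset.sum_nonneg fun i _ => Finset.sum_nonneg fun j _ =>
    I_nonneg fun x => mul_nonneg (hpos x).le (mul_self_nonneg _)
  have hC0 : 0 ≤ C := I_nonneg fun x => mul_nonneg (hpos x).le (mul_self_nonneg _)
  have hG0 : 0 ≤ Gg := Finset.sum_nonneg fun i _ =>
    I_nonneg fun x => mul_nonneg (hpos x).le (mul_self_nonneg _)
  -- Claim 1 : Ee = -D - A
  have claim1 : Ee = -D - A := by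
    have per_i : ∀ i, ∫ x in fundDom d, (u x * pder i u x) * pder i (lap u) x
        = ∑ j, (-((∫ x in fundDom d, pder j u x * pder i u x * pder j (pder i u) x)
            + ∫ x in fundDom d, u x * (pder j (pder i u) x * pder j (pder i u) x))) := by
      intro i
      have hplap : ∀ x, pder i (lap u) x = ∑ j, pder j (pder j (pder i u)) x := by
        intro x
        have h1 : pder i (lap u) x = ∑ j, pder i (pder j (pder j u)) x := by
          have hlapfun : lap u = fun y => ∑ j, pder j (pder j u) y := rfl
          rw [hlapfun, pder_sum Finset.univ (fun j => huij j j) i x]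
        rw [h1]
        refine Finset.sum_congr rfl fun j _ => ?_
        have e1 : pder i (pder j (pder j u)) x = pder j (pder i (pder j u)) x :=
          pder_comm (hui j) i j x
        have e2 : pder i (pder j u) = pder j (pder i u) := funext fun y => pder_comm hu i j y
        rw [e1, e2]
      have hsplit : ∫ x in fundDom d, (u x * pder i u x) * pder i (lap u) x
          = ∑ j, ∫ x in fundDom d, (u x * pder i u x) * pder j (pder j (pder i u)) x := by
        rw [I_congr (g := fun x => ∑ j, (u x * pder i u x) * pder j (pder j (pder i u)) x)
          (fun x => by rw [hplap x, Finset.mul_sum])]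
        exact I_sum Finset.univ fun j =>
          (hu.continuous.mul (hui i).continuous).mul (contDiff_pder (huij i j) j).continuous
      rw [hsplit]
      refine Finset.sum_congr rfl fun j _ => ?_
      have hibp : ∫ x in fundDom d, (u x * pder i u x) * pder j (pder j (pder i u)) x
          = - ∫ x in fundDom d, pder j (fun y => u y * pder i u y) x * pder j (pder i u) x :=
        ibp (hu.mul (hui i)) (huij i j) (ZPeriodic.mulP hp (hpi i)) (hpij i j) j
      rw [hibp]
      congr 1
      rw [I_congr (g := fun x => pder j u x * pder i u x * pder j (pder i u) x
          + u x * (pder j (pder i u) x * pder j (pder i u) x))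
        (fun x => by rw [pder_mul hu (hui i) j x]; ring)]
      exact I_add (((hui j).continuous.mul (hui i).continuous).mul (huij i j).continuous)
        (hu.continuous.mul ((huij i j).continuous.mul (huij i j).continuous))
    calc Ee = ∑ i, ∑ j, (-((∫ x in fundDom d, pder j u x * pder i u x * pder j (pder i u) x)
            + ∫ x in fundDom d, u x * (pder j (pder i u) x * pder j (pder i u) x))) := by
          rw [hEe]; exact Finset.sum_congr rfl fun i _ => per_i i
      _ = -D - A := by
          rw [hD, hA]
          simp only [neg_add, Finset.sum_add_distrib, Finset.sum_neg_distrib]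
          ring
  -- Claim 2 : Ee = -B - C
  have claim2 : Ee = -B - C := by
    have per_i : ∀ i, ∫ x in fundDom d, (u x * pder i u x) * pder i (lap u) x
        = -((∫ x in fundDom d, pder i u x * pder i u x * lap u x)
            + ∫ x in fundDom d, u x * (pder i (pder i u) x * lap u x)) := by
      intro i
      have hibp : ∫ x in fundDom d, (u x * pder i u x) * pder i (lap u) x
          = - ∫ x in fundDom d, pder i (fun y => u y * pder i u y) x * lap u x :=
        ibp (hu.mul (hui i)) hL (ZPeriodic.mulP hp (hpi i)) hpL i
      rw [hibp]
      congr 1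
      rw [I_congr (g := fun x => pder i u x * pder i u x * lap u x
          + u x * (pder i (pder i u) x * lap u x))
        (fun x => by rw [pder_mul hu (hui i) i x]; ring)]
      exact I_add (((hui i).continuous.mul (hui i).continuous).mul hL.continuous)
        (hu.continuous.mul ((huij i i).continuous.mul hL.continuous))
    have hsumM : ∑ i, ∫ x in fundDom d, u x * (pder i (pder i u) x * lap u x) = C := by
      rw [← I_sum Finset.univ (f := fun i x => u x * (pder i (pder i u) x * lap u x)) (fun i => hu.continuous.mul
        ((huij i i).continuous.mul hL.continuous))]
      rw [hC]
      refine I_congr fun x => ?_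
      have h1 : ∑ i, u x * (pder i (pder i u) x * lap u x)
          = (∑ i, pder i (pder i u) x) * (u x * lap u x) := by
        rw [Finset.sum_mul]
        exact Finset.sum_congr rfl fun i _ => by ring
      rw [h1]
      have h2 : (∑ i, pder i (pder i u) x) = lap u x := rfl
      rw [h2]; ring
    calc Ee = ∑ i, (-((∫ x in fundDom d, pder i u x * pder i u x * lap u x)
            + ∫ x in fundDom d, u x * (pder i (pder i u) x * lap u x))) := by
          rw [hEe]; exact Finset.sum_congr rfl fun i _ => per_i i
      _ = -B - C := by
          rw [hB, ← hsumM]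
          simp only [neg_add, Finset.sum_add_distrib, Finset.sum_neg_distrib]
          ring
  -- Claim 3 : 2 D = -B
  have claim3 : 2 * D = -B := by
    have per_ij : ∀ i j, 2 * ∫ x in fundDom d, pder j u x * pder i u x * pder j (pder i u) x
        = - ∫ x in fundDom d, pder j (pder j u) x * (pder i u x * pder i u x) := by
      intro i j
      have hibp : ∫ x in fundDom d, pder j u x * pder j (fun y => pder i u y * pder i u y) x
          = - ∫ x in fundDom d, pder j (pder j u) x * (pder i u x * pder i u x) :=
        ibp (hui j) ((hui i).mul (hui i)) (hpi j) (ZPeriodic.mulP (hpi i) (hpi i)) j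
      rw [← hibp]
      rw [I_congr (f := fun x => pder j u x * pder j (fun y => pder i u y * pder i u y) x)
        (g := fun x => 2 * (pder j u x * pder i u x * pder j (pder i u) x))
        (fun x => by beta_reduce; rw [pder_mul (hui i) (hui i) j x]; ring)]
      rw [integral_const_mul]
    have hsum : ∀ i, ∑ j, ∫ x in fundDom d, pder j (pder j u) x * (pder i u x * pder i u x)
        = ∫ x in fundDom d, pder i u x * pder i u x * lap u x := by
      intro i
      rw [← I_sum Finset.univ (f := fun j x => pder j (pder j u) x * (pder i u x * pder i u x)) (fun j => (huij j j).continuous.mul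
        ((hui i).continuous.mul (hui i).continuous))]
      refine I_congr fun x => ?_
      have h1 : ∑ j, pder j (pder j u) x * (pder i u x * pder i u x)
          = (∑ j, pder j (pder j u) x) * (pder i u x * pder i u x) := by
        rw [Finset.sum_mul]
      rw [h1]
      have h2 : (∑ j, pder j (pder j u) x) = lap u x := rfl
      rw [h2]; ring
    calc 2 * D = ∑ i, ∑ j, 2 * ∫ x in fundDom d,
          pder j u x * pder i u x * pder j (pder i u) x := by
          rw [hD, Finset.mul_sum]
          exact Finset.sum_congr rfl fun i _ => by rw [Finset.mul_sum]
      _ = ∑ i, ∑ j, - ∫ x in fundDom d, pder j (pder j u) x * (pder i u x * pder i u x) :=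
          Finset.sum_congr rfl fun i _ => Finset.sum_congr rfl fun j _ => per_ij i j
      _ = -B := by
          rw [hB]
          simp only [Finset.sum_neg_distrib]
          congr 1
          exact Finset.sum_congr rfl fun i _ => hsum i
  -- total
  have hVc : ∀ i : Fin d, ContDiff ℝ (⊤:ℕ∞)
      (fun y => g * u y * pder i u y - μ * u y * pder i (lap u) y) := fun i =>
    ((contDiff_const.mul hu).mul (hui i)).sub ((contDiff_const.mul hu).mul (hLi i))
  have hVper : ∀ i : Fin d, ZPeriodic
      (fun y => g * u y * pder i u y - μ * u y * pder i (lap u) y) := fun i =>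
    ZPeriodic.subP (ZPeriodic.mulP (ZPeriodic.mulP (ZPeriodic.constP g) hp) (hpi i))
      (ZPeriodic.mulP (ZPeriodic.mulP (ZPeriodic.constP μ) hp) (hpLi i))
  have step0 : ∫ x in fundDom d, (2 * u x * (∑ i, pder i (fun y =>
        g * u y * pder i u y - μ * u y * pder i (lap u) y) x))
      = ∑ i, ∫ x in fundDom d, (2 * u x) * pder i (fun y =>
        g * u y * pder i u y - μ * u y * pder i (lap u) y) x := by
    rw [I_congr (g := fun x => ∑ i, (2 * u x) * pder i (fun y =>
        g * u y * pder i u y - μ * u y * pder i (lap u) y) x)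
      (fun x => by rw [Finset.mul_sum])]
    exact I_sum Finset.univ fun i =>
      (continuous_const.mul hu.continuous).mul (contDiff_pder (hVc i) i).continuous
  have step1 : ∀ i : Fin d, ∫ x in fundDom d, (2 * u x) * pder i (fun y =>
        g * u y * pder i u y - μ * u y * pder i (lap u) y) x
      = (-(2*g)) * (∫ x in fundDom d, u x * (pder i u x * pder i u x))
        + (2*μ) * (∫ x in fundDom d, (u x * pder i u x) * pder i (lap u) x) := by
    intro i
    have hibp : ∫ x in fundDom d, (2 * u x) * pder i (fun y =>
          g * u y * pder i u y - μ * u y * pder i (lap u) y) x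
        = - ∫ x in fundDom d, pder i (fun y => 2 * u y) x
            * (g * u x * pder i u x - μ * u x * pder i (lap u) x) :=
      ibp (contDiff_const.mul hu) (hVc i)
        (ZPeriodic.mulP (ZPeriodic.constP 2) hp) (hVper i) i
    rw [hibp]
    have hsplit : ∫ x in fundDom d, pder i (fun y => 2 * u y) x
          * (g * u x * pder i u x - μ * u x * pder i (lap u) x)
        = (∫ x in fundDom d, (2*g) * (u x * (pder i u x * pder i u x)))
          - ∫ x in fundDom d, (2*μ) * ((u x * pder i u x) * pder i (lap u) x) := by
      rw [I_congr (g := fun x => (2*g) * (u x * (pder i u x * pder i u x))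
          - (2*μ) * ((u x * pder i u x) * pder i (lap u) x))
        (fun x => by rw [pder_const_mul hu 2 i x]; ring)]
      exact I_sub
        (continuous_const.mul (hu.continuous.mul ((hui i).continuous.mul (hui i).continuous)))
        (continuous_const.mul ((hu.continuous.mul (hui i).continuous).mul (hLi i).continuous))
    rw [hsplit, integral_const_mul, integral_const_mul]
    ring
  have total : ∫ x in fundDom d, (2 * u x * (∑ i, pder i (fun y =>
        g * u y * pder i u y - μ * u y * pder i (lap u) y) x))
      = (-(2*g)) * Gg + (2*μ) * Ee := by
    rw [step0, Finset.sum_congr rfl fun i _ => step1 i, Finset.sum_add_distrib,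
      ← Finset.mul_sum, ← Finset.mul_sum, ← hGg, ← hEe]
  rw [total]
  have hEe0 : Ee ≤ 0 := by linarith
  have h1 : 0 ≤ g * Gg := mul_nonneg hg hG0
  have h2 : μ * Ee ≤ 0 := mul_nonpos_of_nonneg_of_nonpos hμ hEe0
  nlinarith [h1, h2]

end LubAux

open LubAux

/-- Decay of the `L²`-norm for the lubrication equation
`∂ₜh − div(g h ∇h − μ h ∇Δh) = 0` on `𝕋^d` (first half of Theorem `Theo2`). -/
theorem lubrication_L2_decay (d : ℕ) (hd : 1 ≤ d) (g μ : ℝ) (hg : 0 ≤ g) (hμ : 0 ≤ μ)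
    (T : ℝ) (h : ℝ × EuclideanSpace ℝ (Fin d) → ℝ)
    (hsm : ContDiff ℝ (⊤ : ℕ∞) h)
    (hper : ∀ t, ZPeriodic (fun x => h (t, x)))
    (hpos : ∀ t x, 0 < h (t, x))
    (heq : ∀ t ∈ Set.Icc (0 : ℝ) T, ∀ x,
      deriv (fun s => h (s, x)) t
        - (∑ i, pder i (fun y =>
            g * h (t, y) * pder i (fun z => h (t, z)) y
            - μ * h (t, y) * pder i (lap (fun z => h (t, z))) y) x) = 0) :
    ∀ t ∈ Set.Icc (0 : ℝ) T,
      deriv (fun s => ∫ x in fundDom d, (h (s, x)) ^ 2) t ≤ 0 := by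

  intro t ht
  have hcont : Continuous h := hsm.continuous
  have hfd : Continuous fun p : ℝ × EuclideanSpace ℝ (Fin d) => fderiv ℝ h p :=
    (hsm.fderiv_right leT).continuous
  set ht' : ℝ × EuclideanSpace ℝ (Fin d) → ℝ := fun p => fderiv ℝ h p (1, 0) with hht'
  have hht'c : Continuous ht' := hfd.clm_apply continuous_const
  have hcurve : ∀ (x) (s : ℝ), HasDerivAt (fun s => h (s, x)) (ht' (s, x)) s := by
    intro x s
    have h1 : HasFDerivAt h (fderiv ℝ h (s, x)) (s, x) :=
      (hsm.differentiable le1 _).hasFDerivAt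
    have h2 : HasDerivAt (fun s : ℝ => ((s, x) : ℝ × EuclideanSpace ℝ (Fin d)))
        ((1 : ℝ), (0 : EuclideanSpace ℝ (Fin d))) s :=
      (hasDerivAt_id s).prodMk (hasDerivAt_const s x)
    simpa [Function.comp_def, hht'] using h1.comp_hasDerivAt s h2
  have hsq : ∀ (x) (s : ℝ),
      HasDerivAt (fun s => h (s, x) ^ 2) (2 * h (s, x) * ht' (s, x)) s := by
    intro x s
    refine ((hcurve x s).fun_pow 2).congr_deriv ?_
    push_cast
    ring
  obtain ⟨M, hM⟩ := (isCompact_Icc.prod (isCompact_closedBall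
      (0 : EuclideanSpace ℝ (Fin d)) (Real.sqrt d))
      : IsCompact ((Set.Icc (t-1) (t+1)) ×ˢ
        Metric.closedBall (0 : EuclideanSpace ℝ (Fin d)) (Real.sqrt d)))
    |>.exists_bound_of_continuousOn
      (f := fun p => 2 * h p * ht' p)
      ((continuous_const.mul hcont).mul hht'c).continuousOn
  have key := hasDerivAt_integral_of_dominated_loc_of_deriv_le
    (μ := volume.restrict (fundDom d))
    (F := fun s x => h (s, x) ^ 2) (F' := fun s x => 2 * h (s, x) * ht' (s, x))
    (x₀ := t) (bound := fun _ => M) (Metric.ball_mem_nhds t zero_lt_one)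
    (Filter.Eventually.of_forall fun s =>
      ((hcont.comp (Continuous.prodMk_right s)).pow 2).aestronglyMeasurable)
    (integrableOn_fundDom ((hcont.comp (Continuous.prodMk_right t)).pow 2))
    (((continuous_const.mul (hcont.comp (Continuous.prodMk_right t))).mul
      (hht'c.comp (Continuous.prodMk_right t))).aestronglyMeasurable)
    ((ae_restrict_iff' measurableSet_fundDom).2 (Filter.Eventually.of_forall
      fun x hx s hs => by
        refine hM (s, x) ?_
        refine Set.mem_prod.2 ⟨?_, fundDom_subset_closedBall hx⟩
        have : |s - t| < 1 := by
          simpa [Real.dist_eq] using hs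
        constructor <;> [linarith [abs_lt.1 this]; linarith [abs_lt.1 this]]))
    ((integrableOn_const_iff).2 (Or.inr volume_fundDom_lt_top))
    (Filter.Eventually.of_forall fun x s _ => hsq x s)
  have hder : deriv (fun s => ∫ x in fundDom d, (h (s, x)) ^ 2) t
      = ∫ x in fundDom d, 2 * h (t, x) * ht' (t, x) := key.2.deriv
  rw [hder]
  have hrw : ∀ x, 2 * h (t, x) * ht' (t, x)
      = 2 * h (t, x) * (∑ i, pder i (fun y =>
          g * h (t, y) * pder i (fun z => h (t, z)) y
          - μ * h (t, y) * pder i (lap (fun z => h (t, z))) y) x) := by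
    intro x
    have h1 : ht' (t, x) = deriv (fun s => h (s, x)) t := ((hcurve x t).deriv).symm
    rw [h1, sub_eq_zero.mp (heq t ht x)]
  rw [I_congr hrw]
  have hu : ContDiff ℝ (⊤:ℕ∞) (fun x : EuclideanSpace ℝ (Fin d) => h (t, x)) :=
    hsm.comp ((contDiff_const (c := t)).prodMk contDiff_id)
  exact spatial hu (hper t) (fun x => hpos t x) g μ hg hμ
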